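/- Let m, m′ be positive integers. Suppose J, K ⊆ {0,1,…,m−1} with |J| = |K| = n are such that H_{J,K,m} is a Hadamard submatrix of F_m, and J′, K′ ⊆ {0,1,…,m′−1} with |J′| = |K′| = n′ are such that H_{J′,K′,m′} is a Hadamard submatrix of F_{m′}. If n ≠ n′, then P_m(J) ≠ P_{m′}(J′). -/

import Mathlib

open Finset

/-- The difference set `D(X) = {x₁ - x₂ : x₁, x₂ ∈ X}` of a finite set of naturals. -/
def diffSet (X : Finset ℕ) : Finset ℤ :=
  (X ×ˢ X).image fun q => (q.1 : ℤ) - (q.2 : ℤ)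

/-- The `m`-th primitive set `P_m(X) = {m / gcd(m,d) : d ∈ D(X)}`. -/
def primSet (m : ℕ) (X : Finset ℕ) : Finset ℕ :=
  (diffSet X).image fun d => m / Nat.gcd m d.natAbs

/-- `H_{J,K,m}` is a Hadamard submatrix of the Fourier matrix `F_m`:
for all distinct `j₁ j₂ ∈ J`, `∑_{k ∈ K} e^{2πi(j₁-j₂)k/m} = 0`. -/
def IsHadamardSub (m : ℕ) (J K : Finset ℕ) : Prop :=
  ∀ j₁ ∈ J, ∀ j₂ ∈ J, j₁ ≠ j₂ →
    ∑ k ∈ K, Complex.exp (2 * Real.pi * Complex.I * ((j₁ : ℂ) - (j₂ : ℂ)) * (k : ℂ) / (m : ℂ)) = 0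

/-- `ν_p^max` of a finite set of naturals. -/
noncomputable def nuMaxN (p : ℕ) (S : Finset ℕ) : ℕ := S.sup fun n => padicValNat p n

/-- `ν_p^min` of a finite set of naturals (0 for the empty set). -/
noncomputable def nuMinN (p : ℕ) (S : Finset ℕ) : ℕ :=
  if h : S.Nonempty then S.inf' h fun n => padicValNat p n else 0

/-- `ν_p^max` of a finite set of integers. -/
noncomputable def nuMaxI (p : ℕ) (S : Finset ℤ) : ℕ := S.sup fun d => padicValInt p d

/-- `ν_p^min` of a finite set of integers (0 for the empty set). -/
noncomputable def nuMinI (p : ℕ) (S : Finset ℤ) : ℕ :=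
  if h : S.Nonempty then S.inf' h fun d => padicValInt p d else 0

/-- `C_m(X) = ∏_{s ∈ P_m(X) \ {1}} Φ_s(1)`. -/
noncomputable def Cm (m : ℕ) (X : Finset ℕ) : ℤ :=
  ∏ s ∈ (primSet m X).erase 1, (Polynomial.cyclotomic s ℤ).eval 1

lemma exp_prim (m a : ℕ) (hm : 0 < m) :
    IsPrimitiveRoot (Complex.exp (2 * Real.pi * Complex.I * ((a : ℂ) / (m : ℂ))))
      (m / Nat.gcd m a) := by
  set g := Nat.gcd m a with hg
  have hg0 : 0 < g := Nat.gcd_pos_of_pos_left _ hm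
  have hgm : g ∣ m := Nat.gcd_dvd_left m a
  have hga : g ∣ a := Nat.gcd_dvd_right m a
  have hs0 : 0 < m / g := Nat.div_pos (Nat.le_of_dvd hm hgm) hg0
  have hco : (a / g).Coprime (m / g) := by
    have := Nat.coprime_div_gcd_div_gcd (m := a) (n := m) (by rw [Nat.gcd_comm]; exact hg0)
    rwa [Nat.gcd_comm a m, ← hg] at this
  have h := Complex.isPrimitiveRoot_exp_of_coprime (a / g) (m / g) hs0.ne' hco
  convert h using 3
  have h1 : (a : ℂ) = (g : ℂ) * ((a / g : ℕ) : ℂ) := by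
    rw [← Nat.cast_mul, Nat.mul_div_cancel' hga]
  have h2 : (m : ℂ) = (g : ℂ) * ((m / g : ℕ) : ℂ) := by
    rw [← Nat.cast_mul, Nat.mul_div_cancel' hgm]
  rw [h1, h2, mul_div_mul_left]
  exact_mod_cast hg0.ne'

/-- If `s ∈ P_{m'}(J')`, `s ≠ 1`, then the `K'`-mask polynomial vanishes at every
primitive `s`-th root of unity. -/
lemma sum_pow_eq_zero (m' : ℕ) (hm' : 0 < m') (J' K' : Finset ℕ)
    (hH' : IsHadamardSub m' J' K') {s : ℕ} (hs : s ∈ primSet m' J') (hs1 : s ≠ 1)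
    {ξ : ℂ} (hξ : IsPrimitiveRoot ξ s) : ∑ k ∈ K', ξ ^ k = 0 := by
  classical
  obtain ⟨d, hd, hds⟩ := Finset.mem_image.1 hs
  obtain ⟨q, hq, hqd⟩ := Finset.mem_image.1 hd
  obtain ⟨hx, hy⟩ := Finset.mem_product.1 hq
  set x := q.1 with hxq
  set y := q.2 with hyq
  have hd0 : d ≠ 0 := by
    rintro rfl
    simp [Nat.div_self hm'] at hds
    exact hs1 hds.symm
  set b := d.natAbs with hb
  have hb0 : 0 < b := Int.natAbs_pos.2 hd0
  have hxy : x ≠ y := by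
    intro h; apply hd0; rw [← hqd]; simp [← hxq, ← hyq, h]
  -- the Hadamard sum for the pair, oriented positively
  have hvan : ∑ k ∈ K', Complex.exp (2 * Real.pi * Complex.I * (b : ℂ) * (k : ℂ) / (m' : ℂ)) = 0 := by
    rcases Nat.lt_or_ge x y with hlt | hge
    · have := hH' y hy x hx (Ne.symm hxy)
      have hcast : ((y : ℂ) - (x : ℂ)) = (b : ℂ) := by
        have : b = y - x := by omega
        rw [this]; push_cast [Nat.cast_sub hlt.le]; ring
      rwa [hcast] at this
    · have hlt : y < x := lt_of_le_of_ne hge (Ne.symm hxy)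
      have := hH' x hx y hy hxy
      have hcast : ((x : ℂ) - (y : ℂ)) = (b : ℂ) := by
        have : b = x - y := by omega
        rw [this]; push_cast [Nat.cast_sub hlt.le]; ring
      rwa [hcast] at this
  set ζ : ℂ := Complex.exp (2 * Real.pi * Complex.I * ((b : ℂ) / (m' : ℂ))) with hζ
  have hζprim : IsPrimitiveRoot ζ s := by
    rw [← hds]; exact exp_prim m' b hm'
  have hζvan : ∑ k ∈ K', ζ ^ k = 0 := by
    rw [← hvan]
    refine Finset.sum_congr rfl fun k _ => ?_
    rw [hζ, ← Complex.exp_nat_mul]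
    congr 1
    ring
  have hs0 : 0 < s := by
    rw [← hds]
    exact Nat.div_pos (Nat.le_of_dvd hm' (Nat.gcd_dvd_left _ _)) (Nat.gcd_pos_of_pos_left _ hm')
  -- polynomial step
  set B : Polynomial ℚ := ∑ k ∈ K', Polynomial.X ^ k with hB
  have haevalζ : Polynomial.aeval ζ B = 0 := by
    rw [hB, map_sum]
    simpa using hζvan
  have hmin : Polynomial.cyclotomic s ℚ = minpoly ℚ ζ :=
    Polynomial.cyclotomic_eq_minpoly_rat hζprim hs0
  have hdvd : Polynomial.cyclotomic s ℚ ∣ B := by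
    rw [hmin]; exact minpoly.dvd ℚ ζ haevalζ
  obtain ⟨C, hC⟩ := hdvd
  have haevalξ : Polynomial.aeval ξ B = 0 := by
    rw [hC, map_mul]
    have : Polynomial.aeval ξ (Polynomial.cyclotomic s ℚ) = 0 := by
      rw [Polynomial.aeval_def, ← Polynomial.eval_map, Polynomial.map_cyclotomic]
      exact (hξ.isRoot_cyclotomic hs0).eq_zero
    rw [this, zero_mul]
  rw [hB, map_sum] at haevalξ
  simpa using haevalξ


open Complex in
lemma conj_exp_term (m : ℕ) (x y k : ℕ) :
    Complex.exp (2 * Real.pi * Complex.I * ((x : ℂ) - (y : ℂ)) * (k : ℂ) / (m : ℂ)) =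
      (starRingEnd ℂ)
        (Complex.exp (2 * Real.pi * Complex.I * ((y : ℂ) - (x : ℂ)) * (k : ℂ) / (m : ℂ))) := by
  rw [← Complex.exp_conj]
  congr 1
  simp only [map_div₀, map_mul, map_sub, Complex.conj_I, Complex.conj_ofReal, map_natCast,
    map_ofNat]
  ring

lemma card_le_card_aux (m m' : ℕ) (hm : 0 < m) (hm' : 0 < m')
    (J J' K' : Finset ℕ) (hJ : J ⊆ Finset.range m)
    (hH' : IsHadamardSub m' J' K')
    (hsub : primSet m J ⊆ primSet m' J') (hK' : K'.Nonempty) :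
    J.card ≤ K'.card := by
  classical
  -- orthogonality of rows J against columns K' (modulus m)
  have horth : ∀ j₁ ∈ J, ∀ j₂ ∈ J, j₁ ≠ j₂ →
      ∑ k ∈ K', Complex.exp (2 * Real.pi * Complex.I * ((j₁ : ℂ) - (j₂ : ℂ)) * (k : ℂ) / (m : ℂ))
        = 0 := by
    have hpos : ∀ j₁ ∈ J, ∀ j₂ ∈ J, j₂ < j₁ →
        ∑ k ∈ K', Complex.exp (2 * Real.pi * Complex.I * ((j₁ : ℂ) - (j₂ : ℂ)) * (k : ℂ) / (m : ℂ))
          = 0 := by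
      intro j₁ h₁ j₂ h₂ hlt
      set a : ℕ := j₁ - j₂ with ha
      have ha0 : 0 < a := by omega
      have ham : a < m := by
        have := Finset.mem_range.1 (hJ h₁); omega
      set s : ℕ := m / Nat.gcd m a with hs
      have hmem : s ∈ primSet m J := by
        apply Finset.mem_image.2
        refine ⟨(j₁ : ℤ) - (j₂ : ℤ), ?_, ?_⟩
        · exact Finset.mem_image.2 ⟨(j₁, j₂), Finset.mem_product.2 ⟨h₁, h₂⟩, rfl⟩
        · have : ((j₁ : ℤ) - (j₂ : ℤ)).natAbs = a := by omega
          rw [this]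
      have hs1 : s ≠ 1 := by
        intro h
        have hgd : Nat.gcd m a ∣ m := Nat.gcd_dvd_left m a
        have hms : Nat.gcd m a * s = m := by rw [hs]; exact Nat.mul_div_cancel' hgd
        have hle : Nat.gcd m a ≤ a := Nat.le_of_dvd ha0 (Nat.gcd_dvd_right m a)
        rw [h, mul_one] at hms
        omega
      have hξ := exp_prim m a hm
      have hvan := sum_pow_eq_zero m' hm' J' K' hH' (hsub hmem) hs1 hξ
      rw [← hvan]
      refine Finset.sum_congr rfl fun k _ => ?_
      rw [← Complex.exp_nat_mul]
      congr 1
      have hcast : ((a : ℕ) : ℂ) = (j₁ : ℂ) - (j₂ : ℂ) := by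
        rw [ha, Nat.cast_sub hlt.le]
      rw [hcast]; ring
    intro j₁ h₁ j₂ h₂ hne
    rcases lt_or_gt_of_ne hne with h | h
    · have h0 := hpos j₂ h₂ j₁ h₁ h
      calc ∑ k ∈ K', Complex.exp (2 * Real.pi * Complex.I * ((j₁ : ℂ) - (j₂ : ℂ)) * (k : ℂ) / (m : ℂ))
          = ∑ k ∈ K', (starRingEnd ℂ)
              (Complex.exp (2 * Real.pi * Complex.I * ((j₂ : ℂ) - (j₁ : ℂ)) * (k : ℂ) / (m : ℂ))) :=
            Finset.sum_congr rfl fun k _ => conj_exp_term m j₁ j₂ k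
        _ = (starRingEnd ℂ)
              (∑ k ∈ K', Complex.exp (2 * Real.pi * Complex.I * ((j₂ : ℂ) - (j₁ : ℂ)) * (k : ℂ) / (m : ℂ))) :=
            (map_sum _ _ _).symm
        _ = 0 := by rw [h0, map_zero]
    · exact hpos j₁ h₁ j₂ h₂ h
  -- linear independence of the rows
  set v : {x // x ∈ J} → ({x // x ∈ K'} → ℂ) :=
    fun j k => Complex.exp (2 * Real.pi * Complex.I * ((j : ℕ) : ℂ) * (((k : ℕ) : ℂ)) / (m : ℂ))
    with hv
  have hterm : ∀ (j i : {x // x ∈ J}) (k : {x // x ∈ K'}),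
      (starRingEnd ℂ) (v i k) * v j k =
        Complex.exp (2 * Real.pi * Complex.I * (((j : ℕ) : ℂ) - ((i : ℕ) : ℂ)) * (((k : ℕ) : ℂ)) / (m : ℂ)) := by
    intro j i k
    rw [hv]
    simp only []
    rw [← Complex.exp_conj, ← Complex.exp_add]
    congr 1
    simp only [map_div₀, map_mul, Complex.conj_I, Complex.conj_ofReal, map_natCast, map_ofNat]
    ring
  have hli : LinearIndependent ℂ v := by
    rw [linearIndependent_iff']
    intro t g hsum i hi
    have h0 : ∑ k ∈ K'.attach, (starRingEnd ℂ) (v i k) * (∑ j ∈ t, g j • v j) k = 0 := by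
      rw [hsum]
      simp
    have hexp : ∑ k ∈ K'.attach, (starRingEnd ℂ) (v i k) * (∑ j ∈ t, g j • v j) k
        = ∑ j ∈ t, g j * ∑ k ∈ K'.attach, (starRingEnd ℂ) (v i k) * v j k :=
      calc ∑ k ∈ K'.attach, (starRingEnd ℂ) (v i k) * (∑ j ∈ t, g j • v j) k
          = ∑ k ∈ K'.attach, ∑ j ∈ t, g j * ((starRingEnd ℂ) (v i k) * v j k) := by
            refine Finset.sum_congr rfl fun k _ => ?_
            rw [Finset.sum_apply, Finset.mul_sum]
            exact Finset.sum_congr rfl fun j _ => by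
              simp only [Pi.smul_apply, smul_eq_mul]; ring
        _ = ∑ j ∈ t, ∑ k ∈ K'.attach, g j * ((starRingEnd ℂ) (v i k) * v j k) :=
            Finset.sum_comm
        _ = ∑ j ∈ t, g j * ∑ k ∈ K'.attach, (starRingEnd ℂ) (v i k) * v j k := by
            refine Finset.sum_congr rfl fun j _ => ?_
            rw [Finset.mul_sum]
    have hS0 : ∀ j : {x // x ∈ J}, j ≠ i →
        ∑ k ∈ K'.attach, (starRingEnd ℂ) (v i k) * v j k = 0 := by
      intro j hne
      have hne' : (j : ℕ) ≠ (i : ℕ) := fun h => hne (Subtype.ext h)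
      calc ∑ k ∈ K'.attach, (starRingEnd ℂ) (v i k) * v j k
          = ∑ k ∈ K'.attach,
              Complex.exp (2 * Real.pi * Complex.I * (((j : ℕ) : ℂ) - ((i : ℕ) : ℂ)) * (((k : ℕ) : ℂ)) / (m : ℂ)) :=
            Finset.sum_congr rfl fun k _ => hterm j i k
        _ = ∑ k ∈ K',
              Complex.exp (2 * Real.pi * Complex.I * (((j : ℕ) : ℂ) - ((i : ℕ) : ℂ)) * ((k : ℂ)) / (m : ℂ)) :=
            Finset.sum_attach K' fun k => Complex.exp
              (2 * Real.pi * Complex.I * (((j : ℕ) : ℂ) - ((i : ℕ) : ℂ)) * ((k : ℂ)) / (m : ℂ))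
        _ = 0 := horth _ j.2 _ i.2 hne'
    have hSi : ∑ k ∈ K'.attach, (starRingEnd ℂ) (v i k) * v i k = (K'.card : ℂ) := by
      have h1 : ∀ k : {x // x ∈ K'}, (starRingEnd ℂ) (v i k) * v i k = 1 := by
        intro k
        rw [hterm i i k, sub_self]
        norm_num
      rw [Finset.sum_congr rfl fun k _ => h1 k]
      simp
    have hfin : (0 : ℂ) = g i * (K'.card : ℂ) := by
      rw [← h0, hexp]
      rw [Finset.sum_eq_single_of_mem i hi (fun j _ hj => by rw [hS0 j hj, mul_zero]), hSi]
    have hcard0 : ((K'.card : ℂ)) ≠ 0 := by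
      simp [Finset.card_ne_zero_of_mem hK'.choose_spec]
    rcases mul_eq_zero.1 hfin.symm with h | h
    · exact h
    · exact absurd h hcard0
  have hfr := hli.fintype_card_le_finrank
  rw [Module.finrank_pi] at hfr
  simpa [Fintype.card_coe] using hfr


theorem primSet_ne_of_size_ne' (m m' n n' : ℕ) (hm : 0 < m) (hm' : 0 < m')
    (J K J' K' : Finset ℕ)
    (hJ : J ⊆ Finset.range m) (hK : K ⊆ Finset.range m)
    (hJ' : J' ⊆ Finset.range m') (hK' : K' ⊆ Finset.range m')
    (hJn : J.card = n) (hKn : K.card = n) (hJn' : J'.card = n') (hKn' : K'.card = n')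
    (hH : IsHadamardSub m J K) (hH' : IsHadamardSub m' J' K') (hnn : n ≠ n') :
    primSet m J ≠ primSet m' J' := by
  intro hP
  have hone : ∀ (mm : ℕ), 0 < mm → ∀ (X : Finset ℕ), X.Nonempty → 1 ∈ primSet mm X := by
    intro mm hmm X ⟨x, hx⟩
    apply Finset.mem_image.2
    refine ⟨(x : ℤ) - (x : ℤ), Finset.mem_image.2 ⟨(x, x), Finset.mem_product.2 ⟨hx, hx⟩, rfl⟩, ?_⟩
    simp [Nat.div_self hmm]
  by_cases hn0 : n = 0
  · have hn'0 : n' ≠ 0 := fun h => hnn (hn0.trans h.symm)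
    have hJ'ne : J'.Nonempty := Finset.card_pos.1 (by omega)
    have hJe : J = ∅ := Finset.card_eq_zero.1 (by omega)
    have : (1 : ℕ) ∈ primSet m J := hP ▸ hone m' hm' J' hJ'ne
    simp [primSet, diffSet, hJe] at this
  by_cases hn'0 : n' = 0
  · have hJne : J.Nonempty := Finset.card_pos.1 (by omega)
    have hJ'e : J' = ∅ := Finset.card_eq_zero.1 (by omega)
    have : (1 : ℕ) ∈ primSet m' J' := hP ▸ hone m hm J hJne
    simp [primSet, diffSet, hJ'e] at this
  have hK'ne : K'.Nonempty := Finset.card_pos.1 (by omega)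
  have hKne : K.Nonempty := Finset.card_pos.1 (by omega)
  have h1 : J.card ≤ K'.card :=
    card_le_card_aux m m' hm hm' J J' K' hJ hH' (le_of_eq hP) hK'ne
  have h2 : J'.card ≤ K.card :=
    card_le_card_aux m' m hm' hm J' J K hJ' hH (le_of_eq hP.symm) hKne
  omega
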